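/- With the FastMap iteration as defined (w¹ = w, pⱼ(v) = (d^j(aⱼ,v) + d^j(aⱼ,bⱼ) - d^j(v,bⱼ))/2, w^{j+1}(u,v) = w^j(u,v) - |pⱼ(u) - pⱼ(v)|), define the heuristic after i iterations as h^i(x,y) = Σ_{j=1}^{i} |pⱼ(x) - pⱼ(y)|. Then for all nodes x, y, g and all i: d¹(x,y) + h^i(y,g) - h^i(x,g) ≥ d^{i+1}(x,y). -/
import Mathlib


/-- The total weight of a walk in a graph, under edge weights `w`. -/
noncomputable def walkWeight {V : Type*} {G : SimpleGraph V} (w : V → V → ℝ)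
    {x y : V} (p : G.Walk x y) : ℝ :=
  (p.darts.map (fun d => w d.toProd.1 d.toProd.2)).sum

/-- Shortest-path distance between `x` and `y` in `G` under edge weights `w`. -/
noncomputable def spDist {V : Type*} (G : SimpleGraph V) (w : V → V → ℝ)
    (x y : V) : ℝ :=
  sInf {c : ℝ | ∃ p : G.Walk x y, walkWeight w p = c}

section Aux
variable {V : Type*} {G : SimpleGraph V}

lemma walkWeight_cons (w : V → V → ℝ) {x y z : V} (hadj : G.Adj x y) (q : G.Walk y z) :
    walkWeight w (q.cons hadj) = w x y + walkWeight w q := by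
  simp [walkWeight]

lemma walkWeight_nonneg (w : V → V → ℝ) (hn : ∀ u v, G.Adj u v → 0 ≤ w u v)
    {x y : V} (q : G.Walk x y) : 0 ≤ walkWeight w q := by
  induction q with
  | nil => simp [walkWeight]
  | cons hadj q ih => rw [walkWeight_cons]; exact add_nonneg (hn _ _ hadj) ih

lemma walkWeight_append (w : V → V → ℝ) {x y z : V} (q1 : G.Walk x y) (q2 : G.Walk y z) :
    walkWeight w (q1.append q2) = walkWeight w q1 + walkWeight w q2 := by
  simp [walkWeight, SimpleGraph.Walk.darts_append]

lemma walkWeight_reverse (w : V → V → ℝ) (hs : ∀ u v, w u v = w v u) {x y : V}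
    (q : G.Walk x y) : walkWeight w q.reverse = walkWeight w q := by
  simp only [walkWeight, SimpleGraph.Walk.darts_reverse, List.map_reverse, List.sum_reverse,
    List.map_map]
  congr 1
  ext d
  simp [Function.comp, SimpleGraph.Dart.symm, hs]



lemma spDist_le (w : V → V → ℝ) (hn : ∀ u v, G.Adj u v → 0 ≤ w u v)
    {x y : V} (q : G.Walk x y) : spDist G w x y ≤ walkWeight w q :=
  csInf_le ⟨0, by rintro c ⟨q', rfl⟩; exact walkWeight_nonneg w hn q'⟩ ⟨q, rfl⟩

lemma le_spDist (hconn : G.Connected) (w : V → V → ℝ) {x y : V} {c : ℝ}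
    (hc : ∀ q : G.Walk x y, c ≤ walkWeight w q) : c ≤ spDist G w x y := by
  obtain ⟨q0⟩ := hconn.preconnected x y
  exact le_csInf ⟨walkWeight w q0, q0, rfl⟩ (by rintro d ⟨q, rfl⟩; exact hc q)

lemma spDist_nonneg (hconn : G.Connected) (w : V → V → ℝ) (hn : ∀ u v, G.Adj u v → 0 ≤ w u v) (x y : V) :
    0 ≤ spDist G w x y :=
  le_spDist hconn w fun q => walkWeight_nonneg w hn q

lemma spDist_symm (hconn : G.Connected) (w : V → V → ℝ) (hs : ∀ u v, w u v = w v u)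
    (hn : ∀ u v, G.Adj u v → 0 ≤ w u v) (x y : V) :
    spDist G w x y = spDist G w y x := by
  have key : ∀ a b : V, spDist G w a b ≤ spDist G w b a := by
    intro a b
    refine le_spDist hconn w fun q => ?_
    calc spDist G w a b ≤ walkWeight w q.reverse := spDist_le w hn q.reverse
    _ = walkWeight w q := walkWeight_reverse w hs q
  exact le_antisymm (key x y) (key y x)

lemma spDist_triangle (hconn : G.Connected) (w : V → V → ℝ) (hn : ∀ u v, G.Adj u v → 0 ≤ w u v) (a b c : V) :
    spDist G w a c ≤ spDist G w a b + spDist G w b c := by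
  have h1 : ∀ q2 : G.Walk b c, spDist G w a c - walkWeight w q2 ≤ spDist G w a b := by
    intro q2
    refine le_spDist hconn w fun q1 => ?_
    have := spDist_le w hn (q1.append q2)
    rw [walkWeight_append] at this
    linarith
  have h2 : spDist G w a c - spDist G w a b ≤ spDist G w b c :=
    le_spDist hconn w fun q2 => by have := h1 q2; linarith
  linarith

lemma spDist_le_weight (w : V → V → ℝ) (hn : ∀ u v, G.Adj u v → 0 ≤ w u v)
    {u v : V} (hadj : G.Adj u v) : spDist G w u v ≤ w u v := by
  have := spDist_le w hn (SimpleGraph.Walk.cons hadj SimpleGraph.Walk.nil)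
  simpa [walkWeight] using this

end Aux

/- FastMap iteration (0-indexed): `W 0` is the original weight function `w¹`;
`p i` is the coordinate produced in iteration `i` from pivots `A i`, `B i`
using the shortest-path distance `d^i = spDist G (W i)`; and
`W (i+1)` is the updated weight function on edges. -/
open Finset in
/-- Lemma 3 of the FastMap paper: with heuristic
`h^i(x,y) = ∑_{j<i} |pⱼ(x) - pⱼ(y)|`, for all nodes `x y g` and all `i`,
`d¹(x,y) + h^i(y,g) - h^i(x,g) ≥ d^{i+1}(x,y)`. -/
theorem fastmap_lemma3 {V : Type*} [Fintype V] (G : SimpleGraph V) (hconn : G.Connected) (w : V → V → ℝ)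
    (hsymm : ∀ u v, w u v = w v u)
    (hnonneg : ∀ u v, G.Adj u v → 0 ≤ w u v)
    (W : ℕ → V → V → ℝ) (hW0 : W 0 = w)
    (A B : ℕ → V) (p : ℕ → V → ℝ)
    (hp : ∀ i v, p i v = (spDist G (W i) (A i) v + spDist G (W i) (A i) (B i)
        - spDist G (W i) v (B i)) / 2)
    (hWsymm : ∀ i u v, W i u v = W i v u)
    (hWsucc : ∀ i u v, G.Adj u v → W (i + 1) u v = W i u v - |p i u - p i v|)
    (h : ℕ → V → V → ℝ)
    (hh : ∀ i x y, h i x y = ∑ j ∈ Finset.range i, |p j x - p j y|) :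
    ∀ i (x y g : V),
      spDist G (W i) x y ≤ spDist G (W 0) x y + h i y g - h i x g := by
  -- 1-Lipschitzness of the coordinate `p i` w.r.t. `spDist G (W i)`, assuming `W i` nonneg
  have lip_of : ∀ i, (∀ u v, G.Adj u v → 0 ≤ W i u v) →
      ∀ u v, |p i u - p i v| ≤ spDist G (W i) u v := by
    intro i hn u v
    have t2 : spDist G (W i) (A i) v ≤ spDist G (W i) (A i) u + spDist G (W i) u v :=
      spDist_triangle hconn (W i) hn _ _ _
    have t1 : spDist G (W i) (A i) u ≤ spDist G (W i) (A i) v + spDist G (W i) v u :=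
      spDist_triangle hconn (W i) hn _ _ _
    have t3 : spDist G (W i) u (B i) ≤ spDist G (W i) u v + spDist G (W i) v (B i) :=
      spDist_triangle hconn (W i) hn _ _ _
    have t4 : spDist G (W i) v (B i) ≤ spDist G (W i) v u + spDist G (W i) u (B i) :=
      spDist_triangle hconn (W i) hn _ _ _
    have s : spDist G (W i) u v = spDist G (W i) v u :=
      spDist_symm hconn (W i) (hWsymm i) hn u v
    rw [hp i u, hp i v, abs_le]
    constructor <;> [skip; skip] <;> rw [div_sub_div_same] <;> [skip; skip]
    · rw [le_div_iff₀ (by norm_num : (0:ℝ) < 2)]; linarith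
    · rw [div_le_iff₀ (by norm_num : (0:ℝ) < 2)]; linarith
  -- all the iterated weights stay nonnegative on edges
  have Wnn : ∀ i u v, G.Adj u v → 0 ≤ W i u v := by
    intro i
    induction i with
    | zero => simpa [hW0] using hnonneg
    | succ n ih =>
      intro u v hadj
      rw [hWsucc n u v hadj]
      have h1 := lip_of n ih u v
      have h2 := spDist_le_weight (W n) ih hadj
      linarith
  -- key step: one FastMap iteration decreases distances by at most the coordinate gap
  have keystep : ∀ i (x y : V),
      spDist G (W (i+1)) x y ≤ spDist G (W i) x y - |p i x - p i y| := by
    intro i x y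
    have wsucc_walk : ∀ {a b : V} (q : G.Walk a b),
        walkWeight (W (i+1)) q
          = walkWeight (W i) q - walkWeight (fun u v => |p i u - p i v|) q := by
      intro a b q
      induction q with
      | nil => simp [walkWeight]
      | cons hadj q ih =>
        rw [walkWeight_cons, walkWeight_cons, walkWeight_cons, ih, hWsucc _ _ _ hadj]; ring
    have absle : ∀ {a b : V} (q : G.Walk a b),
        |p i a - p i b| ≤ walkWeight (fun u v => |p i u - p i v|) q := by
      intro a b q
      induction q with
      | nil => simp [walkWeight]
      | @cons a c b hadj q ih =>
        rw [walkWeight_cons]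
        calc |p i a - p i b| ≤ |p i a - p i c| + |p i c - p i b| := abs_sub_le _ _ _
        _ ≤ |p i a - p i c| + walkWeight (fun u v => |p i u - p i v|) q := by linarith
    have : spDist G (W (i+1)) x y + |p i x - p i y| ≤ spDist G (W i) x y := by
      refine le_spDist hconn (W i) fun q => ?_
      have h1 : spDist G (W (i+1)) x y ≤ walkWeight (W (i+1)) q :=
        spDist_le (W (i+1)) (Wnn (i+1)) q
      have h2 := wsucc_walk q
      have h3 := absle q
      linarith
    linarith
  -- main induction
  intro i x y g
  induction i with
  | zero => simp [hh]
  | succ n ih =>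
    have e1 : h (n+1) y g = h n y g + |p n y - p n g| := by
      rw [hh, hh, Finset.sum_range_succ]
    have e2 : h (n+1) x g = h n x g + |p n x - p n g| := by
      rw [hh, hh, Finset.sum_range_succ]
    have h1 := abs_sub_abs_le_abs_sub (p n x - p n g) (p n y - p n g)
    have h1' : |p n x - p n g| - |p n y - p n g| ≤ |p n x - p n y| := by
      have e : (p n x - p n g) - (p n y - p n g) = p n x - p n y := by ring
      rw [e] at h1; exact h1
    have hk := keystep n x y
    rw [e1, e2]
    linarith
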